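/- Let (f_n) for n ≥ 0 be C^r diffeomorphisms of ℝ with |f_n'| < μ pointwise and ‖Df_n‖_{C^{r-1}} < C₀ for constants μ, C₀ > 1. Write f^n = f_{n-1} ∘ ⋯ ∘ f_0. Then there exists a constant C = C(C₀, r) ≥ 1 such that for every n ≥ 1, ‖Df^n‖_{C^{r-1}} < C·μ^{r(n-1)}. -/

import Mathlib

/-- Composition `f^n = f_{n-1} ∘ ⋯ ∘ f_0`. -/
def compSeq (f : ℕ → ℝ → ℝ) : ℕ → ℝ → ℝ
  | 0 => id
  | n + 1 => f n ∘ compSeq f n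

lemma contDiff_compSeq (N : ℕ∞) (f : ℕ → ℝ → ℝ) (hf : ∀ i, ContDiff ℝ N (f i)) :
    ∀ n, ContDiff ℝ N (compSeq f n)
  | 0 => contDiff_id
  | n + 1 => (hf n).comp (contDiff_compSeq N f hf n)

lemma abs_iter (k : ℕ) (f : ℝ → ℝ) (x : ℝ) :
    |iteratedDeriv k f x| = ‖iteratedFDeriv ℝ k f x‖ := by
  rw [← Real.norm_eq_abs, norm_iteratedFDeriv_eq_norm_iteratedDeriv]

lemma choose_le_two_pow' (k i : ℕ) : k.choose i ≤ 2 ^ k := by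
  rcases le_or_gt i k with h | h
  · calc k.choose i ≤ ∑ j ∈ Finset.range (k + 1), k.choose j :=
        Finset.single_le_sum (fun _ _ => Nat.zero_le _) (Finset.mem_range.mpr (by omega))
    _ = 2 ^ k := Nat.sum_range_choose k
  · simp [Nat.choose_eq_zero_of_lt h]

lemma cd_deriv (r k : ℕ) (hk : k + 1 ≤ r) (f : ℝ → ℝ) (hf : ContDiff ℝ (r:ℕ∞) f) :
    ContDiff ℝ (k:ℕ∞) (deriv f) := by
  have h1 : ContDiff ℝ ((k:ℕ∞) + 1) f := hf.of_le (by exact_mod_cast hk)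
  exact (contDiff_succ_iff_deriv.mp h1).2.2

lemma aux (r : ℕ) (hr : 1 ≤ r) (C₀ μ : ℝ) (hμ : 1 < μ) (hC₀ : 1 < C₀) :
    ∀ k, 1 ≤ k → k ≤ r → ∃ K : ℝ, 1 ≤ K ∧
      ∀ f : ℕ → ℝ → ℝ, (∀ i, ContDiff ℝ (r : ℕ∞) (f i)) →
        (∀ i x, |deriv (f i) x| < μ) →
        (∀ i k', 1 ≤ k' → k' ≤ r → ∀ x, |iteratedDeriv k' (f i) x| < C₀) →
        ∀ n, 1 ≤ n → ∀ j, 1 ≤ j → j ≤ k → ∀ x,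
          |iteratedDeriv j (compSeq f n) x| ≤ K * μ ^ (j * n) := by
  have hμ0 : (0:ℝ) < μ := lt_trans one_pos hμ
  have hμ1 : (1:ℝ) ≤ μ := hμ.le
  intro k hk1
  induction k, hk1 using Nat.le_induction with
  | base =>
    intro _
    refine ⟨1, le_rfl, ?_⟩
    intro f hf hd hb n hn j hj1 hj2 x
    have hj : j = 1 := le_antisymm hj2 hj1
    subst hj
    rw [one_mul, one_mul, iteratedDeriv_one]
    have hdg : ∀ m, Differentiable ℝ (compSeq f m) := fun m =>
      (contDiff_compSeq _ f hf m).differentiable (by exact_mod_cast (Nat.one_le_iff_ne_zero.mp hr))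
    have hdf : ∀ i, Differentiable ℝ (f i) := fun i =>
      (hf i).differentiable (by exact_mod_cast (Nat.one_le_iff_ne_zero.mp hr))
    induction n, hn using Nat.le_induction with
    | base =>
      have h1 : compSeq f 1 = f 0 := Function.comp_id _
      rw [h1, pow_one]
      exact (hd 0 x).le
    | succ n hn ih =>
      have h1 : compSeq f (n+1) = f n ∘ compSeq f n := rfl
      rw [h1, deriv_comp x (hdf n _) (hdg n _), abs_mul, pow_succ, mul_comm (μ ^ n) μ]
      exact mul_le_mul (hd n _).le ih (abs_nonneg _) hμ0.le
  | succ k hk IH =>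
    intro hkr1
    obtain ⟨K, hK1, hK⟩ := IH (le_trans (Nat.le_succ k) hkr1)
    have hK0 : (0:ℝ) < K := lt_of_lt_of_le one_pos hK1
    set Cmax : ℝ := max μ C₀ with hCmax
    have hCmax1 : (1:ℝ) ≤ Cmax := le_trans hC₀.le (le_max_right _ _)
    have hCmax0 : (0:ℝ) < Cmax := lt_of_lt_of_le one_pos hCmax1
    set T₀ : ℝ := 2 ^ k * (Nat.factorial k : ℝ) * Cmax * K ^ (k+1) with hT₀
    have hT₀0 : 0 ≤ T₀ := by positivity
    have hden : (0:ℝ) < μ ^ (k+1) - μ := by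
      have h : μ ^ 1 < μ ^ (k+1) := pow_lt_pow_right₀ hμ (by omega)
      rw [pow_one] at h; linarith
    set K' : ℝ := max (max K C₀) (k * T₀ / (μ ^ (k+1) - μ)) with hK'
    have hKK' : K ≤ K' := le_trans (le_max_left _ _) (le_max_left _ _)
    have hC₀K' : C₀ ≤ K' := le_trans (le_max_right _ _) (le_max_left _ _)
    have hK'1 : (1:ℝ) ≤ K' := le_trans hK1 hKK'
    have hmain : (k:ℝ) * T₀ ≤ K' * (μ ^ (k+1) - μ) := by
      have h1 : (k:ℝ) * T₀ / (μ ^ (k+1) - μ) ≤ K' := le_max_right _ _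
      calc (k:ℝ) * T₀ = (k * T₀ / (μ ^ (k+1) - μ)) * (μ ^ (k+1) - μ) := by
            field_simp
      _ ≤ K' * (μ ^ (k+1) - μ) := mul_le_mul_of_nonneg_right h1 hden.le
    refine ⟨K', hK'1, ?_⟩
    intro f hf hd hb
    have hKf := hK f hf hd hb
    have hdg : ∀ m, Differentiable ℝ (compSeq f m) := fun m =>
      (contDiff_compSeq _ f hf m).differentiable (by exact_mod_cast (Nat.one_le_iff_ne_zero.mp hr))
    have hdf : ∀ i, Differentiable ℝ (f i) := fun i =>
      (hf i).differentiable (by exact_mod_cast (Nat.one_le_iff_ne_zero.mp hr))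
    have key : ∀ n, 1 ≤ n → ∀ x,
        |iteratedDeriv (k+1) (compSeq f n) x| ≤ K' * μ ^ ((k+1) * n) := by
      intro n hn
      induction n, hn using Nat.le_induction with
      | base =>
        intro x
        have h1 : compSeq f 1 = f 0 := Function.comp_id _
        rw [h1]
        have h2 := (hb 0 (k+1) (by omega) hkr1 x).le
        have h3 : (1:ℝ) ≤ μ ^ ((k+1) * 1) := one_le_pow₀ hμ1
        nlinarith
      | succ n hn ih =>
        intro x
        set g : ℝ → ℝ := compSeq f n with hg
        set u : ℝ → ℝ := fun y => deriv (f n) (g y) with hu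
        set v : ℝ → ℝ := deriv g with hv
        have hder : deriv (f n ∘ g) = fun y => u y * v y :=
          funext fun y => deriv_comp y (hdf n _) (hdg n _)
        have e1 : |iteratedDeriv (k+1) (compSeq f (n+1)) x|
            = ‖iteratedFDeriv ℝ k (fun y => u y * v y) x‖ := by
          rw [show compSeq f (n+1) = f n ∘ g from rfl, iteratedDeriv_succ', hder, abs_iter]
        have hcu : ContDiff ℝ (k:ℕ∞) u := by
          have h1 : ContDiff ℝ (k:ℕ∞) (deriv (f n)) := cd_deriv r k hkr1 _ (hf n)
          have h2 : ContDiff ℝ (k:ℕ∞) g :=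
            (contDiff_compSeq _ f hf n).of_le (by exact_mod_cast le_trans (Nat.le_succ k) hkr1)
          exact h1.comp h2
        have hcv : ContDiff ℝ (k:ℕ∞) v :=
          cd_deriv r k hkr1 _ (contDiff_compSeq _ f hf n)
        have hmul := norm_iteratedFDeriv_mul_le hcu hcv x (le_rfl : ((k:ℕ∞):WithTop ℕ∞) ≤ _)
        have ht0 : (k.choose 0 : ℝ) * ‖iteratedFDeriv ℝ 0 u x‖
            * ‖iteratedFDeriv ℝ (k - 0) v x‖ ≤ μ * (K' * μ ^ ((k+1) * n)) := by
          rw [Nat.choose_zero_right, Nat.cast_one, one_mul, Nat.sub_zero,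
            norm_iteratedFDeriv_zero, ← abs_iter]
          have h1 : ‖u x‖ ≤ μ := by
            rw [Real.norm_eq_abs]; exact (hd n (g x)).le
          have h2 : |iteratedDeriv k v x| ≤ K' * μ ^ ((k+1) * n) := by
            rw [hv, ← iteratedDeriv_succ']; exact ih x
          exact mul_le_mul h1 h2 (abs_nonneg _) hμ0.le
        have ht1 : ∀ i ∈ Finset.range k, (k.choose (i+1) : ℝ)
            * ‖iteratedFDeriv ℝ (i+1) u x‖ * ‖iteratedFDeriv ℝ (k - (i+1)) v x‖
            ≤ T₀ * μ ^ ((k+1) * n) := by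
          intro i hi
          rw [Finset.mem_range] at hi
          have hiu : ‖iteratedFDeriv ℝ (i+1) u x‖
              ≤ (Nat.factorial (i+1) : ℝ) * Cmax * (K * μ ^ n) ^ (i+1) := by
            have hgc : ContDiff ℝ ((i+1:ℕ):ℕ∞) (deriv (f n)) :=
              (cd_deriv r k hkr1 _ (hf n)).of_le (by exact_mod_cast hi)
            have hfc : ContDiff ℝ ((i+1:ℕ):ℕ∞) g :=
              (contDiff_compSeq _ f hf n).of_le
                (by exact_mod_cast (by omega : i + 1 ≤ r))
            refine norm_iteratedFDeriv_comp_le hgc hfc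
              (le_rfl : (((i+1:ℕ):ℕ∞):WithTop ℕ∞) ≤ _) x
              (C := Cmax) (D := K * μ ^ n) ?_ ?_
            · intro j hj
              rw [← abs_iter]
              have h2 : |iteratedDeriv j (deriv (f n)) (g x)|
                  = |iteratedDeriv (j+1) (f n) (g x)| := by
                rw [← iteratedDeriv_succ']
              rw [h2]
              exact le_trans (hb n (j+1) (by omega) (by omega) (g x)).le (le_max_right _ _)
            · intro j hj1 hj2
              rw [← abs_iter]
              calc |iteratedDeriv j g x| ≤ K * μ ^ (j * n) := hKf n hn j hj1 (by omega) x
              _ ≤ K ^ j * (μ ^ n) ^ j := by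
                  rw [← pow_mul, mul_comm n j]
                  exact mul_le_mul_of_nonneg_right (le_self_pow₀ hK1 (by omega)) (by positivity)
              _ = (K * μ ^ n) ^ j := (mul_pow _ _ _).symm
          have hiv : ‖iteratedFDeriv ℝ (k - (i+1)) v x‖ ≤ K * μ ^ ((k - i) * n) := by
            rw [← abs_iter]
            have h1 : iteratedDeriv (k - (i+1)) v x = iteratedDeriv (k - i) g x := by
              rw [hv, ← iteratedDeriv_succ', show k - (i+1) + 1 = k - i from by omega]
            rw [h1]
            exact hKf n hn (k - i) (by omega) (by omega) x
          have hμpow : μ ^ (n * (i+1)) * μ ^ ((k - i) * n) = μ ^ ((k+1) * n) := by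
            rw [← pow_add]
            congr 1
            have h2 : i + 1 ≤ k := hi
            have h2 : i + 1 ≤ k := hi
            obtain ⟨c, rfl⟩ := Nat.exists_eq_add_of_le h2
            rw [show i + 1 + c - i = c + 1 from by omega]
            ring
          calc (k.choose (i+1) : ℝ) * ‖iteratedFDeriv ℝ (i+1) u x‖
              * ‖iteratedFDeriv ℝ (k - (i+1)) v x‖
              ≤ (2:ℝ) ^ k * ((Nat.factorial (i+1) : ℝ) * Cmax * (K * μ ^ n) ^ (i+1))
                * (K * μ ^ ((k - i) * n)) := by
                have hc : (k.choose (i+1) : ℝ) ≤ (2:ℝ) ^ k := by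
                  exact_mod_cast choose_le_two_pow' k (i+1)
                gcongr
          _ = (2:ℝ) ^ k * (Nat.factorial (i+1) : ℝ) * Cmax * (K ^ (i+1) * K)
                * (μ ^ (n * (i+1)) * μ ^ ((k - i) * n)) := by
                rw [mul_pow, ← pow_mul]; ring
          _ ≤ (2:ℝ) ^ k * (Nat.factorial k : ℝ) * Cmax * K ^ (k+1)
                * (μ ^ (n * (i+1)) * μ ^ ((k - i) * n)) := by
                have hfac : (Nat.factorial (i+1) : ℝ) ≤ (Nat.factorial k : ℝ) := by
                  exact_mod_cast Nat.factorial_le hi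
                have hKpow : K ^ (i+1) * K ≤ K ^ (k+1) := by
                  rw [← pow_succ]
                  exact pow_le_pow_right₀ hK1 (by omega)
                gcongr
          _ = T₀ * μ ^ ((k+1) * n) := by rw [hμpow, hT₀]
        have hP : (0:ℝ) ≤ μ ^ ((k+1) * n) := by positivity
        have hsum : k * T₀ + μ * K' ≤ K' * μ ^ (k+1) := by nlinarith
        calc |iteratedDeriv (k+1) (compSeq f (n+1)) x|
            = ‖iteratedFDeriv ℝ k (fun y => u y * v y) x‖ := e1
        _ ≤ ∑ i ∈ Finset.range (k + 1), (k.choose i : ℝ) * ‖iteratedFDeriv ℝ i u x‖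
              * ‖iteratedFDeriv ℝ (k - i) v x‖ := hmul
        _ = (∑ i ∈ Finset.range k, (k.choose (i+1) : ℝ) * ‖iteratedFDeriv ℝ (i+1) u x‖
              * ‖iteratedFDeriv ℝ (k - (i+1)) v x‖)
            + (k.choose 0 : ℝ) * ‖iteratedFDeriv ℝ 0 u x‖ * ‖iteratedFDeriv ℝ (k - 0) v x‖ :=
            Finset.sum_range_succ' _ k
        _ ≤ (∑ _i ∈ Finset.range k, T₀ * μ ^ ((k+1) * n)) + μ * (K' * μ ^ ((k+1) * n)) :=
            add_le_add (Finset.sum_le_sum ht1) ht0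
        _ = (k * T₀ + μ * K') * μ ^ ((k+1) * n) := by
            rw [Finset.sum_const, Finset.card_range, nsmul_eq_mul]; ring
        _ ≤ K' * μ ^ (k+1) * μ ^ ((k+1) * n) := mul_le_mul_of_nonneg_right hsum hP
        _ = K' * μ ^ ((k+1) * (n+1)) := by
            rw [show (k+1) * (n+1) = (k+1) * n + (k+1) from by ring, pow_add]; ring
    intro n hn j hj1 hj2 x
    rcases eq_or_lt_of_le hj2 with he | hl
    · rw [he]; exact key n hn x
    · calc |iteratedDeriv j (compSeq f n) x| ≤ K * μ ^ (j * n) :=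
        hKf n hn j hj1 (by omega) x
      _ ≤ K' * μ ^ (j * n) := mul_le_mul_of_nonneg_right hKK' (by positivity)

/-- Compositions of 1D diffeomorphisms: if `|f_n'| < μ` and
`‖Df_n‖_{C^{r-1}} < C₀`, then `‖Df^n‖_{C^{r-1}} < C μ^{r(n-1)}` for `C = C(C₀, r)`. -/
theorem stmt_10 (r : ℕ) (hr : 1 ≤ r) (C₀ μ : ℝ) (hμ : 1 < μ) (hC₀ : 1 < C₀) :
    ∃ C : ℝ, 1 ≤ C ∧ ∀ f : ℕ → ℝ → ℝ,
      (∀ i, ContDiff ℝ (r : ℕ∞) (f i)) →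
      (∀ i, Function.Bijective (f i)) →
      (∀ i x, |deriv (f i) x| < μ) →
      (∀ i k, 1 ≤ k → k ≤ r → ∀ x, |iteratedDeriv k (f i) x| < C₀) →
      ∀ n, 1 ≤ n → ∀ k, 1 ≤ k → k ≤ r → ∀ x,
        |iteratedDeriv k (compSeq f n) x| < C * μ ^ (r * (n - 1)) := by
  have hμ0 : (0:ℝ) < μ := lt_trans one_pos hμ
  obtain ⟨K, hK1, hK⟩ := aux r hr C₀ μ hμ hC₀ r hr le_rfl
  have hKr0 : (0:ℝ) ≤ K * μ ^ r := by positivity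
  refine ⟨K * μ ^ r + 1, by linarith, ?_⟩
  intro f hf hbij hd hb n hn k hk1 hk2 x
  obtain ⟨m, rfl⟩ : ∃ m, n = m + 1 := ⟨n - 1, by omega⟩
  have h1 := hK f hf hd hb (m+1) hn k hk1 hk2 x
  have h2 : (0:ℝ) < μ ^ (r * (m + 1 - 1)) := by positivity
  calc |iteratedDeriv k (compSeq f (m+1)) x| ≤ K * μ ^ (k * (m+1)) := h1
  _ ≤ K * μ ^ (r * (m+1)) := by
      gcongr
      exact hμ.le
  _ = K * μ ^ r * μ ^ (r * (m + 1 - 1)) := by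
      rw [show r * (m+1) = r + r * (m + 1 - 1) from by rw [Nat.add_sub_cancel, Nat.mul_succ, Nat.add_comm], pow_add]
      try ring
  _ < (K * μ ^ r + 1) * μ ^ (r * (m + 1 - 1)) := by nlinarith
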